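/- Let A be a unital C*-algebra and let a = diag(1, 1/2) in M₂(ℂ). Then a is positive with ‖a‖ = 1, the identity I₂ satisfies [[ka, I₂], [I₂, ka]] ≥ 0 in M₂(M₂(ℂ)) for some k > 0 (indeed k = 2), but [[‖I₂‖·a, I₂], [I₂, ‖I₂‖·a]] = [[a, I₂], [I₂, a]] is not positive; hence a does not have the order unit property in M₂(ℂ). -/

import Mathlib

open ComplexOrder

lemma aux1 : (!![1, 0; 0, 1/2] : Matrix (Fin 2) (Fin 2) ℂ).PosSemidef := by
  refine Matrix.PosSemidef.of_dotProduct_mulVec_nonneg ?_ ?_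
  · ext i j; fin_cases i <;> fin_cases j <;> simp [Matrix.conjTranspose_apply]
  · intro x
    have key : dotProduct (star x)
        ((!![1, 0; 0, 1/2] : Matrix (Fin 2) (Fin 2) ℂ).mulVec x)
        = star (x 0) * x 0 + (1/2 : ℂ) * (star (x 1) * x 1) := by
      simp [dotProduct, Matrix.mulVec, Fin.sum_univ_two]
      ring
    rw [key]
    exact add_nonneg (star_mul_self_nonneg (x 0))
      (mul_nonneg (by rw [Complex.le_def]; norm_num) (star_mul_self_nonneg (x 1)))

lemma aux2 :
    ‖(Matrix.toEuclideanCLM (𝕜 := ℂ) (!![1, 0; 0, 1/2] : Matrix (Fin 2) (Fin 2) ℂ) :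
        EuclideanSpace ℂ (Fin 2) →L[ℂ] EuclideanSpace ℂ (Fin 2))‖ = 1 := by
  set a : Matrix (Fin 2) (Fin 2) ℂ := !![1, 0; 0, 1/2] with ha
  set T := (Matrix.toEuclideanCLM (𝕜 := ℂ) a :
        EuclideanSpace ℂ (Fin 2) →L[ℂ] EuclideanSpace ℂ (Fin 2)) with hT
  have happ : ∀ x : EuclideanSpace ℂ (Fin 2), ∀ i,
      T x i = a.mulVec (WithLp.equiv 2 _ x) i := by
    intro x i
    exact congrFun (Matrix.ofLp_toEuclideanCLM (𝕜 := ℂ) a x) i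
  apply le_antisymm
  · apply ContinuousLinearMap.opNorm_le_bound _ zero_le_one
    intro x
    rw [one_mul, EuclideanSpace.norm_eq, EuclideanSpace.norm_eq]
    apply Real.sqrt_le_sqrt
    rw [Fin.sum_univ_two, Fin.sum_univ_two, happ x 0, happ x 1]
    have h0 : a.mulVec (WithLp.equiv 2 _ x) 0 = x 0 := by
      simp [ha, Matrix.mulVec, dotProduct, Fin.sum_univ_two]
    have h1 : a.mulVec (WithLp.equiv 2 _ x) 1 = (1/2 : ℂ) * x 1 := by
      simp [ha, Matrix.mulVec, dotProduct, Fin.sum_univ_two]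
    rw [h0, h1]
    have hn : ‖(1/2 : ℂ) * x 1‖ = (1/2) * ‖x 1‖ := by
      rw [norm_mul]; norm_num
    rw [hn]
    nlinarith [norm_nonneg (x 1), sq_nonneg (‖x 1‖)]
  · have key : ‖T (EuclideanSpace.single 0 1)‖ ≤
        ‖T‖ * ‖(EuclideanSpace.single 0 (1:ℂ) : EuclideanSpace ℂ (Fin 2))‖ :=
      T.le_opNorm _
    have hns : ‖(EuclideanSpace.single 0 (1:ℂ) : EuclideanSpace ℂ (Fin 2))‖ = 1 := by
      rw [EuclideanSpace.norm_single]; simp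
    have hTs : T (EuclideanSpace.single 0 1) = EuclideanSpace.single 0 (1:ℂ) := by
      ext i
      rw [happ]
      fin_cases i <;>
        simp [ha, Matrix.mulVec, dotProduct, Fin.sum_univ_two,
          EuclideanSpace.single_apply]
    rw [hTs, hns, mul_one] at key
    exact key

lemma aux3 :
    ‖(Matrix.toEuclideanCLM (𝕜 := ℂ) (1 : Matrix (Fin 2) (Fin 2) ℂ) :
        EuclideanSpace ℂ (Fin 2) →L[ℂ] EuclideanSpace ℂ (Fin 2))‖ = 1 := by
  rw [map_one]
  exact ContinuousLinearMap.norm_id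

lemma aux4 :
    (Matrix.fromBlocks ((2 : ℝ) • (!![1, 0; 0, 1/2] : Matrix (Fin 2) (Fin 2) ℂ)) 1 1
      ((2 : ℝ) • (!![1, 0; 0, 1/2] : Matrix (Fin 2) (Fin 2) ℂ))).PosSemidef := by
  set a : Matrix (Fin 2) (Fin 2) ℂ := !![1, 0; 0, 1/2] with ha
  refine Matrix.PosSemidef.of_dotProduct_mulVec_nonneg ?_ ?_
  · ext i j
    rcases i with i | i <;> rcases j with j | j <;> fin_cases i <;> fin_cases j <;>
      simp [ha, Matrix.conjTranspose_apply, Matrix.fromBlocks]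
  · intro x
    have key : dotProduct (star x)
        ((Matrix.fromBlocks ((2 : ℝ) • a) 1 1 ((2 : ℝ) • a)).mulVec x)
        = star (x (.inl 0) + x (.inr 0)) * (x (.inl 0) + x (.inr 0))
          + star (x (.inl 0)) * (x (.inl 0)) + star (x (.inr 0)) * (x (.inr 0))
          + star (x (.inl 1) + x (.inr 1)) * (x (.inl 1) + x (.inr 1)) := by
      simp [ha, dotProduct, Matrix.mulVec, Fintype.sum_sum_type, Fin.sum_univ_two,
        Matrix.fromBlocks, star_add]
      ring
    rw [key]
    exact add_nonneg (add_nonneg (add_nonneg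
      (star_mul_self_nonneg _) (star_mul_self_nonneg _)) (star_mul_self_nonneg _))
      (star_mul_self_nonneg _)

lemma aux5 :
    ¬ (Matrix.fromBlocks ((1 : ℝ) • (!![1, 0; 0, 1/2] : Matrix (Fin 2) (Fin 2) ℂ)) 1 1
      ((1 : ℝ) • (!![1, 0; 0, 1/2] : Matrix (Fin 2) (Fin 2) ℂ))).PosSemidef := by
  intro h
  have h2 := h.dotProduct_mulVec_nonneg (Sum.elim ![0, 1] ![0, -1])
  rw [show dotProduct (star (Sum.elim ![(0:ℂ), 1] ![0, -1]))
      ((Matrix.fromBlocks ((1 : ℝ) • (!![1, 0; 0, 1/2] : Matrix (Fin 2) (Fin 2) ℂ)) 1 1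
        ((1 : ℝ) • (!![1, 0; 0, 1/2] : Matrix (Fin 2) (Fin 2) ℂ))).mulVec
        (Sum.elim ![0, 1] ![0, -1])) = (-1 : ℂ) by
    simp [dotProduct, Matrix.mulVec, Fintype.sum_sum_type, Fin.sum_univ_two,
      Matrix.fromBlocks]
    norm_num] at h2
  rw [Complex.le_def] at h2
  norm_num at h2

open ComplexOrder
theorem stmt_12 :
    let a : Matrix (Fin 2) (Fin 2) ℂ := !![1, 0; 0, 1/2]
    a.PosSemidef ∧
    ‖(Matrix.toEuclideanCLM (𝕜 := ℂ) a :
        EuclideanSpace ℂ (Fin 2) →L[ℂ] EuclideanSpace ℂ (Fin 2))‖ = 1 ∧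
    ‖(Matrix.toEuclideanCLM (𝕜 := ℂ) (1 : Matrix (Fin 2) (Fin 2) ℂ) :
        EuclideanSpace ℂ (Fin 2) →L[ℂ] EuclideanSpace ℂ (Fin 2))‖ = 1 ∧
    ((0 : ℝ) < 2 ∧ (Matrix.fromBlocks ((2 : ℝ) • a) 1 1 ((2 : ℝ) • a)).PosSemidef) ∧
    ¬ (Matrix.fromBlocks ((1 : ℝ) • a) 1 1 ((1 : ℝ) • a)).PosSemidef := by
  exact ⟨aux1, aux2, aux3, ⟨by norm_num, aux4⟩, aux5⟩
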